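/- arXiv:0907.4649 — 3 statements merged into one kernel-verified Lean document; each statement's English description precedes it below -/
import Mathlib

section
/- Let α ∈ (1,2), ω(ξ) = −ξ|ξ|^α and Ω(ξ₁,ξ₂) = −ω(ξ₁+ξ₂) + ω(ξ₁) + ω(ξ₂). For all ξ₁, ξ₂ ∈ ℝ with ξ₁ ≠ 0, ξ₂ ≠ 0 and ξ₁ + ξ₂ ≠ 0, the quantity |Ω(ξ₁,ξ₂)| / ( min(|ξ₁|, |ξ₂|, |ξ₁+ξ₂|) · max(|ξ₁|^α, |ξ₂|^α, |ξ₁+ξ₂|^α) ) lies in the interval [2^{-4}, 2^{4}]. -/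
noncomputable section

/-- The dispersion relation `ω(ξ) = -ξ|ξ|^α`. -/
def omega (α ξ : ℝ) : ℝ := -ξ * |ξ| ^ α

/-- The resonance function `Ω(ξ₁,ξ₂) = -ω(ξ₁+ξ₂) + ω(ξ₁) + ω(ξ₂)`. -/
def Omega (α ξ₁ ξ₂ : ℝ) : ℝ := -omega α (ξ₁ + ξ₂) + omega α ξ₁ + omega α ξ₂

namespace Res7

/-- The quantity of interest. -/
def Q (α ξ₁ ξ₂ : ℝ) : ℝ :=
  |Omega α ξ₁ ξ₂| /
    (min (min |ξ₁| |ξ₂|) |ξ₁ + ξ₂| *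
      max (max (|ξ₁| ^ α) (|ξ₂| ^ α)) (|ξ₁ + ξ₂| ^ α))

lemma omega_neg (α ξ : ℝ) : omega α (-ξ) = -omega α ξ := by
  unfold omega; rw [abs_neg]; ring

lemma Omega_eq (α ξ₁ ξ₂ : ℝ) :
    Omega α ξ₁ ξ₂ = (ξ₁ + ξ₂) * |ξ₁ + ξ₂| ^ α - ξ₁ * |ξ₁| ^ α - ξ₂ * |ξ₂| ^ α := by
  simp [Omega, omega]; ring

lemma Q_swap (α ξ₁ ξ₂ : ℝ) : Q α ξ₂ ξ₁ = Q α ξ₁ ξ₂ := by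
  have h : Omega α ξ₂ ξ₁ = Omega α ξ₁ ξ₂ := by
    rw [Omega_eq, Omega_eq, add_comm ξ₂ ξ₁]; ring
  unfold Q
  rw [h, add_comm ξ₂ ξ₁, min_comm |ξ₂| |ξ₁|, max_comm (|ξ₂| ^ α) (|ξ₁| ^ α)]

lemma Q_neg (α ξ₁ ξ₂ : ℝ) : Q α (-ξ₁) (-ξ₂) = Q α ξ₁ ξ₂ := by
  have hsum : -ξ₁ + -ξ₂ = -(ξ₁ + ξ₂) := by ring
  have h : Omega α (-ξ₁) (-ξ₂) = -Omega α ξ₁ ξ₂ := by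
    rw [Omega_eq, Omega_eq, hsum, abs_neg, abs_neg, abs_neg]; ring
  unfold Q
  rw [h, hsum, abs_neg, abs_neg, abs_neg, abs_neg]

lemma Q_third (α ξ₁ ξ₂ : ℝ) : Q α ξ₁ (-(ξ₁ + ξ₂)) = Q α ξ₁ ξ₂ := by
  have hsum : ξ₁ + -(ξ₁ + ξ₂) = -ξ₂ := by ring
  have h : Omega α ξ₁ (-(ξ₁ + ξ₂)) = Omega α ξ₁ ξ₂ := by
    rw [Omega_eq, Omega_eq, hsum, abs_neg, abs_neg]; ring
  unfold Q
  rw [h, hsum, abs_neg, abs_neg]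
  congr 2
  · simp only [min_assoc, min_comm, min_left_comm]
  · simp only [max_assoc, max_comm, max_left_comm]

/-- Tangent line inequality for `x ↦ x^p`, `p ≥ 1`. -/
lemma tangent {p x y : ℝ} (hp : 1 ≤ p) (hx : 0 ≤ x) (hy : 0 < y) :
    y ^ p + p * y ^ (p - 1) * (x - y) ≤ x ^ p := by
  have hs : -1 ≤ x / y - 1 := by
    have : 0 ≤ x / y := div_nonneg hx hy.le
    linarith
  have hB := one_add_mul_self_le_rpow_one_add hs hp
  have h1 : (1 : ℝ) + (x / y - 1) = x / y := by ring
  rw [h1] at hB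
  have hyp : (0 : ℝ) < y ^ p := Real.rpow_pos_of_pos hy p
  have := mul_le_mul_of_nonneg_right hB hyp.le
  calc y ^ p + p * y ^ (p - 1) * (x - y)
      = (1 + p * (x / y - 1)) * y ^ p := by
        rw [Real.rpow_sub_one hy.ne']
        field_simp
    _ ≤ (x / y) ^ p * y ^ p := this
    _ = x ^ p := by
        rw [Real.div_rpow hx hy.le, div_mul_cancel₀]
        exact (Real.rpow_pos_of_pos hy p).ne'

/-- Main case: both frequencies positive, `b ≤ a`. -/
lemma pos_case (α a b : ℝ) (hα : α ∈ Set.Ioo (1 : ℝ) 2) (hb : 0 < b) (ha : 0 < a) :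
    Q α a b ∈ Set.Icc ((2 : ℝ) ^ (-4 : ℤ)) ((2 : ℝ) ^ (4 : ℤ)) := by
  obtain ⟨hα1, hα2⟩ := hα
  -- WLOG b ≤ a
  wlog hba : b ≤ a generalizing a b
  · rw [← Q_swap]; exact this b a ha hb (le_of_not_ge hba)
  have hs : 0 < a + b := by linarith
  have hp1 : (1 : ℝ) ≤ α + 1 := by linarith
  have hkey : α + 1 - 1 = α := by ring
  -- F = (a+b)^(α+1) - a^(α+1) - b^(α+1)
  set s := a + b with hsdef
  have hupper : s ^ (α + 1) - a ^ (α + 1) ≤ (α + 1) * s ^ α * b := by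
    have := tangent hp1 ha.le hs
    rw [hkey] at this
    have hab : a - s = -b := by rw [hsdef]; ring
    rw [hab] at this
    linarith
  have hlower : (α + 1) * a ^ α * b ≤ s ^ (α + 1) - a ^ (α + 1) := by
    have := tangent hp1 hs.le ha
    rw [hkey] at this
    have hab : s - a = b := by rw [hsdef]; ring
    rw [hab] at this
    linarith
  have hbα : b ^ α ≤ a ^ α := Real.rpow_le_rpow hb.le hba (by linarith)
  have hbαb : b ^ (α + 1) = b ^ α * b := by
    rw [Real.rpow_add hb, Real.rpow_one]
  have haα : (0 : ℝ) < a ^ α := Real.rpow_pos_of_pos ha α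
  have hsα : (0 : ℝ) < s ^ α := Real.rpow_pos_of_pos hs α
  have hFlow : α * (a ^ α * b) ≤ s ^ (α + 1) - a ^ (α + 1) - b ^ (α + 1) := by
    rw [hbαb]; nlinarith
  have hFhigh : s ^ (α + 1) - a ^ (α + 1) - b ^ (α + 1) ≤ (α + 1) * (s ^ α * b) := by
    have hbp : (0 : ℝ) < b ^ (α + 1) := Real.rpow_pos_of_pos hb _
    nlinarith
  -- identify Omega
  have habs : |a| = a := abs_of_pos ha
  have hbabs : |b| = b := abs_of_pos hb
  have hsabs : |a + b| = a + b := abs_of_pos hs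
  have hOm : Omega α a b = s ^ (α + 1) - a ^ (α + 1) - b ^ (α + 1) := by
    rw [Omega_eq, habs, hbabs, hsabs, ← hsdef]
    rw [Real.rpow_add hs, Real.rpow_add ha, Real.rpow_add hb]
    simp [Real.rpow_one]; ring
  have hF0 : 0 < s ^ (α + 1) - a ^ (α + 1) - b ^ (α + 1) := by
    have : 0 < α * (a ^ α * b) := by positivity
    linarith
  -- denominator
  have hmin : min (min |a| |b|) |a + b| = b := by
    rw [habs, hbabs, hsabs, min_eq_right hba, min_eq_left (by linarith)]
  have hmax : max (max (|a| ^ α) (|b| ^ α)) (|a + b| ^ α) = s ^ α := by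
    rw [habs, hbabs, hsabs, ← hsdef, max_eq_left hbα,
      max_eq_right (Real.rpow_le_rpow ha.le (by linarith) (by linarith))]
  unfold Q
  rw [hmin, hmax, hOm, abs_of_pos hF0]
  have hden : (0 : ℝ) < b * s ^ α := by positivity
  constructor
  · rw [le_div_iff₀ hden]
    -- need 2^(-4) * (b * s^α) ≤ F
    have h2 : s ^ α ≤ 4 * a ^ α := by
      have h1 : s ≤ 2 * a := by linarith
      have := Real.rpow_le_rpow hs.le h1 (by linarith : (0:ℝ) ≤ α)
      have h2a : (2 * a) ^ α = 2 ^ α * a ^ α := Real.mul_rpow (by norm_num) ha.le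
      have h2b : (2 : ℝ) ^ α ≤ 2 ^ (2 : ℝ) := by
        apply Real.rpow_le_rpow_left_iff (by norm_num : (1:ℝ) < 2) |>.mpr hα2.le
      have h2c : (2 : ℝ) ^ (2 : ℝ) = 4 := by
        rw [show (2:ℝ) = ((2:ℕ):ℝ) by norm_num, Real.rpow_natCast]; norm_num
      nlinarith
    have h24 : (2 : ℝ) ^ (-4 : ℤ) = 1 / 16 := by norm_num
    rw [h24]
    have hA : b * s ^ α ≤ b * (4 * a ^ α) := mul_le_mul_of_nonneg_left h2 hb.le
    have hB : a ^ α * b ≤ α * (a ^ α * b) := by nlinarith [mul_pos haα hb]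
    linarith
  · rw [div_le_iff₀ hden]
    have : (2 : ℝ) ^ (4 : ℤ) = 16 := by norm_num
    rw [this]
    nlinarith

end Res7

/-- The size of the resonance function: for nonzero frequencies,
`|Ω(ξ₁,ξ₂)| / (min(|ξ₁|,|ξ₂|,|ξ₁+ξ₂|) · max(|ξ₁|^α,|ξ₂|^α,|ξ₁+ξ₂|^α)) ∈ [2⁻⁴, 2⁴]`. -/
theorem statement7 (α : ℝ) (hα : α ∈ Set.Ioo (1 : ℝ) 2) (ξ₁ ξ₂ : ℝ)
    (h1 : ξ₁ ≠ 0) (h2 : ξ₂ ≠ 0) (h3 : ξ₁ + ξ₂ ≠ 0) :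
    |Omega α ξ₁ ξ₂| /
        (min (min |ξ₁| |ξ₂|) |ξ₁ + ξ₂| *
          max (max (|ξ₁| ^ α) (|ξ₂| ^ α)) (|ξ₁ + ξ₂| ^ α)) ∈
      Set.Icc ((2 : ℝ) ^ (-4 : ℤ)) ((2 : ℝ) ^ (4 : ℤ)) := by
  show Res7.Q α ξ₁ ξ₂ ∈ _
  -- WLOG ξ₁ > 0 or handle signs via symmetry
  rcases h1.lt_or_gt with hn1 | hp1
  all_goals rcases h2.lt_or_gt with hn2 | hp2
  · -- both negative
    rw [← Res7.Q_neg]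
    exact Res7.pos_case α _ _ hα (by linarith) (by linarith)
  · -- ξ₁ < 0 < ξ₂
    rcases h3.lt_or_gt with hs | hs
    · -- sum < 0 : Q ξ₁ ξ₂ = Q ξ₂ ξ₁ = Q ξ₂ (-(ξ₂+ξ₁)); ξ₂ > 0 and -(ξ₂+ξ₁) > 0
      rw [← Res7.Q_swap, ← Res7.Q_third]
      exact Res7.pos_case α _ _ hα (by linarith) (by linarith)
    · -- sum > 0 : Q ξ₁ ξ₂ = Q (-(ξ₁+ξ₂)) ... use Q ξ₁ ξ₂ = Q ξ₁ (-(ξ₁+ξ₂))? both need pos.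
      -- Q ξ₁ ξ₂ = Q (-ξ₁) (-ξ₂) = Q (-ξ₁) (ξ₁+ξ₂)?  Q_third: Q α (-ξ₁) (-((-ξ₁)+(-ξ₂))) = Q α (-ξ₁) (-ξ₂)
      rw [← Res7.Q_neg, ← Res7.Q_third, ← Res7.Q_swap]
      have h : -(-ξ₁ + -ξ₂) = ξ₁ + ξ₂ := by ring
      rw [h]
      exact Res7.pos_case α _ _ hα (by linarith) (by linarith)
  · -- ξ₂ < 0 < ξ₁
    rcases h3.lt_or_gt with hs | hs
    · rw [← Res7.Q_third]
      exact Res7.pos_case α _ _ hα (by linarith) (by linarith)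
    · rw [← Res7.Q_neg, ← Res7.Q_swap, ← Res7.Q_third]
      have h : -(-ξ₂ + -ξ₁) = ξ₂ + ξ₁ := by ring
      rw [h]
      exact Res7.pos_case α _ _ hα (by linarith) (by linarith)
  · exact Res7.pos_case α _ _ hα (by linarith) (by linarith)
end
end

section
/- There exists a constant C = C(α) such that for all k₁, k₂, k₃ ∈ ℤ, all j₁, j₂, j₃ ∈ ℤ_{≥0}, and all functions f_i ∈ L²(ℝ²) (i = 1,2,3) with f_i supported in U_{k_i} × J_{j_i}, one has |J(f₁, f₂, f₃)| ≤ C · min(|U_{k₁}|, |U_{k₂}|, |U_{k₃}|)^{1/2} · 2^{min(j₁,j₂,j₃)/2} · ‖f₁‖_{L²} ‖f₂‖_{L²} ‖f₃‖_{L²}. -/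
open MeasureTheory Set
open scoped ENNReal

noncomputable section

/-- The sequence `n₀ = 0`, `n₁ = 4`, `n_{k+1} = n_k + n_k^{1/2}` for `k ≥ 1`. -/
def nseq : ℕ → ℝ
  | 0 => 0
  | 1 => 4
  | k + 2 => nseq (k + 1) + Real.sqrt (nseq (k + 1))

/-- Extension of `nseq` to `ℤ` by `n_{-k} = -n_k`. -/
def nZ : ℤ → ℝ := fun k => if 0 ≤ k then nseq k.toNat else -nseq (-k).toNat

/-- The frequency sets `U_k`. -/
def Uset (k : ℤ) : Set ℝ :=
  if 1 ≤ k then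
    {ν : ℝ | |ν| ∈ Set.Icc ((5 * nZ (k - 1) + nZ k) / 6) ((5 * nZ (k + 1) + nZ k) / 6)}
  else {ν : ℝ | |ν| ∈ Set.Icc ((2 : ℝ) ^ (k + 1)) ((2 : ℝ) ^ (k + 3))}

/-- The modulation sets `J_j`: `J₀ = [-2,2]` and `J_j = {|ν| ∈ [2^{j-1}, 2^{j+1}]}`. -/
def Jset : ℕ → Set ℝ
  | 0 => Set.Icc (-2) 2
  | j + 1 => {ν : ℝ | |ν| ∈ Set.Icc ((2 : ℝ) ^ j) ((2 : ℝ) ^ (j + 2))}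

/-- The trilinear form
`J(f,g,h) = ∫ f(ξ₁,μ₁) g(ξ₂,μ₂) h(ξ₁+ξ₂, μ₁+μ₂+Ω(ξ₁,ξ₂))`. -/
def Jnt (α : ℝ) (f g h : ℝ × ℝ → ℂ) : ℂ :=
  ∫ p : (ℝ × ℝ) × (ℝ × ℝ),
    f p.1 * g p.2 * h (p.1.1 + p.2.1, p.1.2 + p.2.2 + Omega α p.1.1 p.2.1)

/-- The `L²(ℝ²)` norm, as a real number. -/
def L2N (f : ℝ × ℝ → ℂ) : ℝ := (eLpNorm f 2 volume).toReal

/-- `d_α(k₁,k₂;k₃) = inf { ||ξ₁|^α - |ξ₂|^α| : ξ₁ ∈ U_{k₁}, ξ₂ ∈ U_{k₂}, ξ₁+ξ₂ ∈ U_{k₃} }`. -/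
def dalpha (α : ℝ) (k₁ k₂ k₃ : ℤ) : ℝ :=
  sInf ((fun p : ℝ × ℝ => |(|p.1| ^ α) - (|p.2| ^ α)|) ''
    {p : ℝ × ℝ | p.1 ∈ Uset k₁ ∧ p.2 ∈ Uset k₂ ∧ p.1 + p.2 ∈ Uset k₃})

/-- Convolution on `ℝ²`. -/
def conv2 (f g : ℝ × ℝ → ℂ) : ℝ × ℝ → ℂ :=
  fun q => ∫ p : ℝ × ℝ, f p * g (q.1 - p.1, q.2 - p.2)

/-- The sets `V_k^j = {(ξ,τ) : ξ ∈ U_k, τ - ω(ξ) ∈ J_j}`. -/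
def Vset (α : ℝ) (k : ℤ) (j : ℕ) : Set (ℝ × ℝ) :=
  {q : ℝ × ℝ | q.1 ∈ Uset k ∧ q.2 - omega α q.1 ∈ Jset j}

/-- The median of three natural numbers. -/
def med3 (a b c : ℕ) : ℕ := a + b + c - max (max a b) c - min (min a b) c

/-!
Writing `J = ∫∫ f₁(p) f₂(q) f₃(σ(p,q))` with the shear `σ(p,q) = (ξ₁+ξ₂, μ₁+μ₂+Ω(ξ₁,ξ₂))`,
which preserves Lebesgue measure in each of `p` and `q` separately, Cauchy–Schwarz against any
two of the three functions bounds `|J|` by `‖f₁‖‖f₂‖‖f₃‖` times the square root of the largest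
measure of a fibre `{q ∈ supp f_i : σ(p,q) ∈ supp f_l}` (after the substitution `r = σ(p,q)` for
the pair `f₁, f₂`). By Fubini such a fibre has measure at most `min(|U_{k_i}|, |U_{k_l}|) ·
min(|J_{j_i}|, |J_{j_l}|)`. Any frequency index and any modulation index lie in a common pair,
which gives `min_k |U_k| · min_j |J_j|`, and `|J_j| ≤ 4 · 2^j`.
-/

open Function

theorem lintegral_mul_sq_le {α : Type*} [MeasurableSpace α] {μ : Measure α} {f g : α → ℝ≥0∞}
    (hf : AEMeasurable f μ) (hg : AEMeasurable g μ) :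
    (∫⁻ a, f a * g a ∂μ) ^ 2 ≤ (∫⁻ a, f a ^ 2 ∂μ) * ∫⁻ a, g a ^ 2 ∂μ := by
  have h := ENNReal.lintegral_mul_le_Lp_mul_Lq μ Real.HolderConjugate.two_two hf hg
  simp only [ENNReal.rpow_two] at h
  calc (∫⁻ a, f a * g a ∂μ) ^ 2
      ≤ ((∫⁻ a, f a ^ 2 ∂μ) ^ (1 / 2 : ℝ) * (∫⁻ a, g a ^ 2 ∂μ) ^ (1 / 2 : ℝ)) ^ 2 := by
        gcongr; exact h
    _ = (∫⁻ a, f a ^ 2 ∂μ) * ∫⁻ a, g a ^ 2 ∂μ := by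
        rw [mul_pow, ← ENNReal.rpow_natCast, ← ENNReal.rpow_natCast, ← ENNReal.rpow_mul,
          ← ENNReal.rpow_mul]
        norm_num

theorem lintegral_enorm_sq_eq_eLpNorm_sq {α E : Type*} [MeasurableSpace α] {μ : Measure α}
    [NormedAddCommGroup E] (u : α → E) : ∫⁻ a, ‖u a‖ₑ ^ 2 ∂μ = eLpNorm u 2 μ ^ 2 := by
  simpa using (eLpNorm_nnreal_pow_eq_lintegral (f := u) (μ := μ) (p := 2) two_ne_zero).symm

theorem MeasureTheory.AEStronglyMeasurable.exists_measurable_support_subset_ae_eq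
    {α E : Type*} [MeasurableSpace α] {μ : Measure α} [NormedAddCommGroup E] [MeasurableSpace E]
    [BorelSpace E] {f : α → E} (hf : AEStronglyMeasurable f μ) {S : Set α}
    (hS : MeasurableSet S) (hfS : support f ⊆ S) :
    ∃ g : α → E, Measurable g ∧ support g ⊆ S ∧ f =ᵐ[μ] g :=
  ⟨S.indicator (hf.mk f), hf.stronglyMeasurable_mk.measurable.indicator hS,
    support_indicator_subset,
    (Filter.EventuallyEq.of_eq (indicator_eq_self.2 hfS).symm).trans hf.ae_eq_mk.indicator⟩

theorem measure_inter_preimage_le_min {α β : Type*} [MeasurableSpace α] [MeasurableSpace β]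
    {μ : Measure α} {ν : Measure β} {f : α → β} (hf : MeasurePreserving f μ ν) (s : Set α)
    {t : Set β} (ht : MeasurableSet t) : μ (s ∩ f ⁻¹' t) ≤ min (μ s) (ν t) :=
  le_min (measure_mono inter_subset_left)
    ((measure_mono inter_subset_right).trans_eq (hf.measure_preimage ht.nullMeasurableSet))

theorem measure_prod_inter_skew_preimage_le {α β γ δ : Type*} [MeasurableSpace α]
    [MeasurableSpace β] [MeasurableSpace γ] [MeasurableSpace δ] {μa : Measure α} {μb : Measure β}
    {μc : Measure γ} {μd : Measure δ} [SFinite μc] {e : α → β} (he : MeasurePreserving e μa μb)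
    {d : α → γ → δ} (hd : Measurable (uncurry d)) (hd' : ∀ a, MeasurePreserving (d a) μc μd)
    {A : Set α} {B : Set β} {C : Set γ} {D : Set δ} (hA : MeasurableSet A) (hB : MeasurableSet B)
    (hC : MeasurableSet C) (hD : MeasurableSet D) :
    (μa.prod μc) (A ×ˢ C ∩ (fun p => (e p.1, d p.1 p.2)) ⁻¹' (B ×ˢ D)) ≤
      min (μa A) (μb B) * min (μc C) (μd D) := by
  have hs : MeasurableSet (A ×ˢ C ∩ (fun p => (e p.1, d p.1 p.2)) ⁻¹' (B ×ˢ D)) :=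
    (hA.prod hC).inter (((he.measurable.comp measurable_fst).prodMk hd) (hB.prod hD))
  rw [Measure.prod_apply hs]
  calc ∫⁻ a, μc (Prod.mk a ⁻¹' (A ×ˢ C ∩ (fun p => (e p.1, d p.1 p.2)) ⁻¹' (B ×ˢ D))) ∂μa
      ≤ ∫⁻ a, (A ∩ e ⁻¹' B).indicator (fun _ => min (μc C) (μd D)) a ∂μa := by
        refine lintegral_mono fun a => ?_
        by_cases ha : a ∈ A ∩ e ⁻¹' B
        · rw [indicator_of_mem ha]
          exact (measure_mono fun c hc => (⟨hc.1.2, hc.2.2⟩ : c ∈ C ∩ d a ⁻¹' D)).trans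
            (measure_inter_preimage_le_min (hd' a) C hD)
        · rw [indicator_of_notMem ha, nonpos_iff_eq_zero]
          exact measure_mono_null (fun c hc => (ha ⟨hc.1.1, hc.2.1⟩).elim) measure_empty
    _ = min (μc C) (μd D) * μa (A ∩ e ⁻¹' B) :=
        lintegral_indicator_const (hA.inter (he.measurable hB)) _
    _ ≤ min (μa A) (μb B) * min (μc C) (μd D) := by
        rw [mul_comm]; gcongr; exact measure_inter_preimage_le_min he A hB

theorem lintegral_prod_indicator_fst_le {X Y : Type*} [MeasurableSpace X] [MeasurableSpace Y]
    {μ : Measure X} {ν : Measure Y} [SFinite ν] {f : X → ℝ≥0∞} (hf : Measurable f)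
    {E : Set (X × Y)} (hE : MeasurableSet E) {M : ℝ≥0∞} (hM : ∀ x, ν (Prod.mk x ⁻¹' E) ≤ M) :
    ∫⁻ z, E.indicator (fun z => f z.1) z ∂μ.prod ν ≤ (∫⁻ x, f x ∂μ) * M := by
  rw [lintegral_prod (E.indicator fun z => f z.1)
      ((hf.comp measurable_fst).indicator hE).aemeasurable,
    ← lintegral_mul_const _ hf]
  refine lintegral_mono fun x => ?_
  calc ∫⁻ y, E.indicator (fun z => f z.1) (x, y) ∂ν
      = ∫⁻ y, (Prod.mk x ⁻¹' E).indicator (fun _ => f x) y ∂ν := rfl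
    _ = f x * ν (Prod.mk x ⁻¹' E) := lintegral_indicator_const (measurable_prodMk_left hE) _
    _ ≤ f x * M := by gcongr; exact hM x

theorem sq_lintegral_lintegral_mul_comp_le {X Y Z : Type*} [MeasurableSpace X]
    [MeasurableSpace Y] [MeasurableSpace Z] {μ : Measure X} {ν : Measure Y} {ρ : Measure Z}
    [SFinite μ] [SFinite ν] {π : X → Y → Z} (hπ : Measurable (uncurry π))
    (hπμ : ∀ y, MeasurePreserving (π · y) μ ρ) {F : X → ℝ≥0∞} {G : Y → ℝ≥0∞} {H : Z → ℝ≥0∞}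
    (hF : Measurable F) (hG : Measurable G) (hH : Measurable H) {M : ℝ≥0∞}
    (hM : ∀ x, ν (support G ∩ π x ⁻¹' support H) ≤ M) :
    (∫⁻ x, ∫⁻ y, F x * G y * H (π x y) ∂ν ∂μ) ^ 2 ≤
      (∫⁻ x, F x ^ 2 ∂μ) * (∫⁻ y, G y ^ 2 ∂ν) * (∫⁻ z, H z ^ 2 ∂ρ) * M := by
  have hHπ : Measurable fun z : X × Y => H (π z.1 z.2) := hH.comp hπ
  set E : Set (X × Y) := {z | G z.2 ≠ 0 ∧ H (π z.1 z.2) ≠ 0}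
  have hE : MeasurableSet E :=
    ((hG.comp measurable_snd) (measurableSet_singleton 0).compl).inter
      (hHπ (measurableSet_singleton 0).compl)
  have hGH : Measurable fun z : X × Y => G z.2 * H (π z.1 z.2) := (hG.comp measurable_snd).mul hHπ
  have hFE : Measurable (E.indicator fun z => F z.1) := (hF.comp measurable_fst).indicator hE
  -- Cauchy–Schwarz pairs `G ⊗ H ∘ π` with `F` restricted to the set `E` where the integrand lives;
  -- the fibre bound `hM` enters only through the second factor.
  have hsplit : ∀ z : X × Y,
      F z.1 * G z.2 * H (π z.1 z.2) = G z.2 * H (π z.1 z.2) * E.indicator (fun z => F z.1) z := by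
    intro z
    by_cases hz : z ∈ E
    · rw [indicator_of_mem hz]; ring
    · rw [indicator_of_notMem hz]
      rcases not_and_or.1 hz with h | h <;> simp_all
  have hGH_sq : ∫⁻ z, (G z.2 * H (π z.1 z.2)) ^ 2 ∂μ.prod ν =
      (∫⁻ y, G y ^ 2 ∂ν) * ∫⁻ z, H z ^ 2 ∂ρ := by
    rw [lintegral_prod_symm _ (hGH.pow_const 2).aemeasurable,
      ← lintegral_mul_const _ (hG.pow_const 2)]
    refine lintegral_congr fun y => ?_
    simp only [mul_pow]
    rw [lintegral_const_mul _ (f := fun x => H (π x y) ^ 2)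
        ((hH.pow_const 2).comp (hπμ y).measurable),
      (hπμ y).lintegral_comp (hH.pow_const 2)]
  have hFE_sq : ∫⁻ z, E.indicator (fun z => F z.1) z ^ 2 ∂μ.prod ν ≤ (∫⁻ x, F x ^ 2 ∂μ) * M := by
    have hsq : ∀ z, E.indicator (fun z => F z.1) z ^ 2 = E.indicator (fun z => F z.1 ^ 2) z :=
      fun z => by by_cases hz : z ∈ E <;> simp [hz]
    simp_rw [hsq]
    exact lintegral_prod_indicator_fst_le (hF.pow_const 2) hE hM
  calc (∫⁻ x, ∫⁻ y, F x * G y * H (π x y) ∂ν ∂μ) ^ 2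
      = (∫⁻ z, G z.2 * H (π z.1 z.2) * E.indicator (fun z => F z.1) z ∂μ.prod ν) ^ 2 := by
        simp_rw [← hsplit]
        exact congrArg (· ^ 2) (lintegral_prod _
          (((hF.comp measurable_fst).mul (hG.comp measurable_snd)).mul hHπ).aemeasurable).symm
    _ ≤ (∫⁻ z, (G z.2 * H (π z.1 z.2)) ^ 2 ∂μ.prod ν) *
          ∫⁻ z, E.indicator (fun z => F z.1) z ^ 2 ∂μ.prod ν :=
        lintegral_mul_sq_le hGH.aemeasurable hFE.aemeasurable
    _ ≤ ((∫⁻ y, G y ^ 2 ∂ν) * ∫⁻ z, H z ^ 2 ∂ρ) * ((∫⁻ x, F x ^ 2 ∂μ) * M) := by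
        rw [hGH_sq]; gcongr
    _ = _ := by ring

theorem min_min_eq_or {M : Type*} [LinearOrder M] (a₁ a₂ a₃ : M) :
    min (min a₁ a₂) a₃ = a₁ ∨ min (min a₁ a₂) a₃ = a₂ ∨ min (min a₁ a₂) a₃ = a₃ := by
  simp only [min_def]; split_ifs <;> simp

/-- Whichever indices realise the two minima on the right, some pair on the left contains both. -/
theorem min_min_mul_min_min_le {M : Type*} [Mul M] [LinearOrder M] [MulLeftMono M]
    [MulRightMono M] (a₁ a₂ a₃ b₁ b₂ b₃ : M) :
    min (min (min a₂ a₁ * min b₂ b₁) (min a₁ a₃ * min b₁ b₃)) (min a₂ a₃ * min b₂ b₃) ≤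
      min (min a₁ a₂) a₃ * min (min b₁ b₂) b₃ := by
  rcases min_min_eq_or a₁ a₂ a₃ with ha | ha | ha <;>
    rcases min_min_eq_or b₁ b₂ b₃ with hb | hb | hb <;> rw [ha, hb] <;>
    first
    | (refine (min_le_left _ _).trans ((min_le_left _ _).trans (mul_le_mul' ?_ ?_)) <;>
        first | exact min_le_left _ _ | exact min_le_right _ _)
    | (refine (min_le_left _ _).trans ((min_le_right _ _).trans (mul_le_mul' ?_ ?_)) <;>
        first | exact min_le_left _ _ | exact min_le_right _ _)
    | (refine (min_le_right _ _).trans (mul_le_mul' ?_ ?_) <;>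
        first | exact min_le_left _ _ | exact min_le_right _ _)

theorem measurePreserving_real_skew {e : ℝ → ℝ} (he : MeasurePreserving e) {d : ℝ → ℝ → ℝ}
    (hd : Measurable (uncurry d)) (hd' : ∀ x, MeasurePreserving (d x)) :
    MeasurePreserving (fun p : ℝ × ℝ => (e p.1, d p.1 p.2)) := by
  rw [Measure.volume_eq_prod]
  exact he.skew_product hd (ae_of_all _ fun x => (hd' x).map_eq)

def shear (φ : ℝ → ℝ → ℝ) (p q : ℝ × ℝ) : ℝ × ℝ := (p.1 + q.1, p.2 + q.2 + φ p.1 q.1)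

def unshear (φ : ℝ → ℝ → ℝ) (r q : ℝ × ℝ) : ℝ × ℝ := (r.1 - q.1, r.2 - q.2 - φ (r.1 - q.1) q.1)

def shearForm (φ : ℝ → ℝ → ℝ) (F G H : ℝ × ℝ → ℝ≥0∞) : ℝ≥0∞ :=
  ∫⁻ p, ∫⁻ q, F p * G q * H (shear φ p q)

section Shear

variable {φ : ℝ → ℝ → ℝ}

theorem unshear_shear (p q : ℝ × ℝ) : unshear φ (shear φ p q) q = p := by
  simp only [shear, unshear, add_sub_cancel_right]
  exact Prod.ext rfl (by ring)

theorem shear_comm (hφ : ∀ a b, φ a b = φ b a) (p q : ℝ × ℝ) : shear φ p q = shear φ q p := by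
  simp only [shear, hφ p.1, add_comm]

variable (hφ : Measurable (uncurry φ))
include hφ

theorem measurable_shear : Measurable (uncurry (shear φ)) := by
  unfold shear uncurry; fun_prop

theorem measurable_unshear : Measurable (uncurry (unshear φ)) := by
  unfold unshear uncurry; fun_prop

theorem measurePreserving_shear_left (q : ℝ × ℝ) : MeasurePreserving (shear φ · q) :=
  measurePreserving_real_skew (measurePreserving_add_right volume q.1)
    (d := fun x y => y + q.2 + φ x q.1) (by unfold uncurry; fun_prop)
    fun _ => (measurePreserving_add_right _ _).comp (measurePreserving_add_right _ _)

theorem measurePreserving_unshear_left (q : ℝ × ℝ) : MeasurePreserving (unshear φ · q) :=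
  measurePreserving_real_skew (measurePreserving_sub_right volume q.1)
    (d := fun x y => y - q.2 - φ (x - q.1) q.1) (by unfold uncurry; fun_prop)
    fun _ => (measurePreserving_sub_right _ _).comp (measurePreserving_sub_right _ _)

theorem quasiMeasurePreserving_uncurry_shear :
    Measure.QuasiMeasurePreserving (uncurry (shear φ)) := by
  have h : MeasurePreserving (fun z : (ℝ × ℝ) × (ℝ × ℝ) => (z.2, shear φ z.1 z.2)) :=
    (MeasurePreserving.id volume |>.skew_product (g := fun q p => shear φ p q)
      ((measurable_shear hφ).comp measurable_swap)
      (ae_of_all _ fun q => (measurePreserving_shear_left hφ q).map_eq)).comp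
      Measure.measurePreserving_swap
  exact Measure.quasiMeasurePreserving_snd.comp h.quasiMeasurePreserving

theorem volume_inter_shear_preimage_le (p : ℝ × ℝ) {A B A' B' : Set ℝ} (hA : MeasurableSet A)
    (hB : MeasurableSet B) (hA' : MeasurableSet A') (hB' : MeasurableSet B') :
    volume (A ×ˢ B ∩ shear φ p ⁻¹' (A' ×ˢ B')) ≤
      min (volume A) (volume A') * min (volume B) (volume B') := by
  rw [Measure.volume_eq_prod]
  exact measure_prod_inter_skew_preimage_le (measurePreserving_add_left volume p.1)
    (d := fun x y => p.2 + y + φ p.1 x) (by unfold uncurry; fun_prop)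
    (fun _ => (measurePreserving_add_right _ _).comp (measurePreserving_add_left _ _))
    hA hA' hB hB'

theorem volume_inter_unshear_preimage_le (r : ℝ × ℝ) {A B A' B' : Set ℝ} (hA : MeasurableSet A)
    (hB : MeasurableSet B) (hA' : MeasurableSet A') (hB' : MeasurableSet B') :
    volume (A ×ˢ B ∩ unshear φ r ⁻¹' (A' ×ˢ B')) ≤
      min (volume A) (volume A') * min (volume B) (volume B') := by
  rw [Measure.volume_eq_prod]
  exact measure_prod_inter_skew_preimage_le (Measure.measurePreserving_sub_left volume r.1)
    (d := fun x y => r.2 - y - φ (r.1 - x) x) (by unfold uncurry; fun_prop)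
    (fun _ => (measurePreserving_sub_right _ _).comp (Measure.measurePreserving_sub_left _ _))
    hA hA' hB hB'

variable {F G H : ℝ × ℝ → ℝ≥0∞} (hF : Measurable F) (hG : Measurable G) (hH : Measurable H)
  {A₁ B₁ A₂ B₂ A₃ B₃ : Set ℝ}
include hF hG hH

theorem sq_shearForm_le₂₃ (hA₂ : MeasurableSet A₂) (hB₂ : MeasurableSet B₂)
    (hA₃ : MeasurableSet A₃) (hB₃ : MeasurableSet B₃) (hGs : support G ⊆ A₂ ×ˢ B₂)
    (hHs : support H ⊆ A₃ ×ˢ B₃) :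
    shearForm φ F G H ^ 2 ≤ (∫⁻ p, F p ^ 2) * (∫⁻ p, G p ^ 2) * (∫⁻ p, H p ^ 2) *
      (min (volume A₂) (volume A₃) * min (volume B₂) (volume B₃)) :=
  sq_lintegral_lintegral_mul_comp_le (measurable_shear hφ) (measurePreserving_shear_left hφ)
    hF hG hH fun p => (measure_mono (inter_subset_inter hGs (preimage_mono hHs))).trans
      (volume_inter_shear_preimage_le hφ p hA₂ hB₂ hA₃ hB₃)

theorem sq_shearForm_le₁₃ (hsymm : ∀ a b, φ a b = φ b a) (hA₁ : MeasurableSet A₁)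
    (hB₁ : MeasurableSet B₁) (hA₃ : MeasurableSet A₃) (hB₃ : MeasurableSet B₃)
    (hFs : support F ⊆ A₁ ×ˢ B₁) (hHs : support H ⊆ A₃ ×ˢ B₃) :
    shearForm φ F G H ^ 2 ≤ (∫⁻ p, F p ^ 2) * (∫⁻ p, G p ^ 2) * (∫⁻ p, H p ^ 2) *
      (min (volume A₁) (volume A₃) * min (volume B₁) (volume B₃)) := by
  have hswap : shearForm φ F G H = shearForm φ G F H := by
    rw [shearForm, lintegral_lintegral_swap
      (((hF.comp measurable_fst).mul (hG.comp measurable_snd)).mul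
        (hH.comp (measurable_shear hφ))).aemeasurable]
    simp only [shearForm, shear_comm hsymm _ _, mul_comm (F _)]
  calc shearForm φ F G H ^ 2
      ≤ (∫⁻ p, G p ^ 2) * (∫⁻ p, F p ^ 2) * (∫⁻ p, H p ^ 2) *
          (min (volume A₁) (volume A₃) * min (volume B₁) (volume B₃)) :=
        hswap ▸ sq_shearForm_le₂₃ hφ hG hF hH hA₁ hB₁ hA₃ hB₃ hFs hHs
    _ = _ := by ring

theorem sq_shearForm_le₁₂ (hA₁ : MeasurableSet A₁) (hB₁ : MeasurableSet B₁)
    (hA₂ : MeasurableSet A₂) (hB₂ : MeasurableSet B₂) (hFs : support F ⊆ A₁ ×ˢ B₁)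
    (hGs : support G ⊆ A₂ ×ˢ B₂) :
    shearForm φ F G H ^ 2 ≤ (∫⁻ p, F p ^ 2) * (∫⁻ p, G p ^ 2) * (∫⁻ p, H p ^ 2) *
      (min (volume A₂) (volume A₁) * min (volume B₂) (volume B₁)) := by
  have hm : Measurable fun z : (ℝ × ℝ) × (ℝ × ℝ) => H z.1 * G z.2 * F (unshear φ z.1 z.2) :=
    ((hH.comp measurable_fst).mul (hG.comp measurable_snd)).mul (hF.comp (measurable_unshear hφ))
  have hsubst : shearForm φ F G H = ∫⁻ r, ∫⁻ q, H r * G q * F (unshear φ r q) :=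
    calc shearForm φ F G H = ∫⁻ q, ∫⁻ p, F p * G q * H (shear φ p q) :=
          lintegral_lintegral_swap (((hF.comp measurable_fst).mul
            (hG.comp measurable_snd)).mul (hH.comp (measurable_shear hφ))).aemeasurable
      _ = ∫⁻ q, ∫⁻ r, H r * G q * F (unshear φ r q) := lintegral_congr fun q => by
          rw [← (measurePreserving_shear_left hφ q).lintegral_comp
            (f := fun r => H r * G q * F (unshear φ r q))
            (hm.comp (measurable_id.prodMk measurable_const))]
          simp only [unshear_shear]
          exact lintegral_congr fun p => by ring
      _ = ∫⁻ r, ∫⁻ q, H r * G q * F (unshear φ r q) :=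
          (lintegral_lintegral_swap hm.aemeasurable).symm
  calc shearForm φ F G H ^ 2
      ≤ (∫⁻ p, H p ^ 2) * (∫⁻ p, G p ^ 2) * (∫⁻ p, F p ^ 2) *
          (min (volume A₂) (volume A₁) * min (volume B₂) (volume B₁)) :=
        hsubst ▸ sq_lintegral_lintegral_mul_comp_le (measurable_unshear hφ)
          (measurePreserving_unshear_left hφ) hH hG hF fun r =>
            (measure_mono (inter_subset_inter hGs (preimage_mono hFs))).trans
              (volume_inter_unshear_preimage_le hφ r hA₂ hB₂ hA₁ hB₁)
    _ = _ := by ring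

theorem sq_shearForm_le (hsymm : ∀ a b, φ a b = φ b a) (hA₁ : MeasurableSet A₁)
    (hB₁ : MeasurableSet B₁) (hA₂ : MeasurableSet A₂) (hB₂ : MeasurableSet B₂)
    (hA₃ : MeasurableSet A₃) (hB₃ : MeasurableSet B₃) (hFs : support F ⊆ A₁ ×ˢ B₁)
    (hGs : support G ⊆ A₂ ×ˢ B₂) (hHs : support H ⊆ A₃ ×ˢ B₃) :
    shearForm φ F G H ^ 2 ≤ (∫⁻ p, F p ^ 2) * (∫⁻ p, G p ^ 2) * (∫⁻ p, H p ^ 2) *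
      (min (min (volume A₁) (volume A₂)) (volume A₃) *
        min (min (volume B₁) (volume B₂)) (volume B₃)) := by
  have h := le_min (le_min (sq_shearForm_le₁₂ hφ hF hG hH hA₁ hB₁ hA₂ hB₂ hFs hGs)
    (sq_shearForm_le₁₃ hφ hF hG hH hsymm hA₁ hB₁ hA₃ hB₃ hFs hHs))
    (sq_shearForm_le₂₃ hφ hF hG hH hA₂ hB₂ hA₃ hB₃ hGs hHs)
  rw [← mul_min, ← mul_min] at h
  exact h.trans (mul_le_mul_right (min_min_mul_min_min_le _ _ _ _ _ _) _)

end Shear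

theorem enorm_integral_shear_sq_le {𝕜 : Type*} [RCLike 𝕜] {φ : ℝ → ℝ → ℝ}
    (hφ : Measurable (uncurry φ)) (hsymm : ∀ a b, φ a b = φ b a) {f g h : ℝ × ℝ → 𝕜}
    (hf : AEStronglyMeasurable f) (hg : AEStronglyMeasurable g) (hh : AEStronglyMeasurable h)
    {A₁ B₁ A₂ B₂ A₃ B₃ : Set ℝ} (hA₁ : MeasurableSet A₁) (hB₁ : MeasurableSet B₁)
    (hA₂ : MeasurableSet A₂) (hB₂ : MeasurableSet B₂) (hA₃ : MeasurableSet A₃)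
    (hB₃ : MeasurableSet B₃) (hfs : support f ⊆ A₁ ×ˢ B₁) (hgs : support g ⊆ A₂ ×ˢ B₂)
    (hhs : support h ⊆ A₃ ×ˢ B₃) :
    ‖∫ z : (ℝ × ℝ) × (ℝ × ℝ), f z.1 * g z.2 * h (shear φ z.1 z.2)‖ₑ ^ 2 ≤
      eLpNorm f 2 volume ^ 2 * eLpNorm g 2 volume ^ 2 * eLpNorm h 2 volume ^ 2 *
        (min (min (volume A₁) (volume A₂)) (volume A₃) *
          min (min (volume B₁) (volume B₂)) (volume B₃)) := by
  obtain ⟨f', hf'm, hf's, hff'⟩ := hf.exists_measurable_support_subset_ae_eq (hA₁.prod hB₁) hfs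
  obtain ⟨g', hg'm, hg's, hgg'⟩ := hg.exists_measurable_support_subset_ae_eq (hA₂.prod hB₂) hgs
  obtain ⟨h', hh'm, hh's, hhh'⟩ := hh.exists_measurable_support_subset_ae_eq (hA₃.prod hB₃) hhs
  have hcongr : ∫ z : (ℝ × ℝ) × (ℝ × ℝ), f z.1 * g z.2 * h (shear φ z.1 z.2) =
      ∫ z : (ℝ × ℝ) × (ℝ × ℝ), f' z.1 * g' z.2 * h' (shear φ z.1 z.2) := by
    refine integral_congr_ae ?_
    filter_upwards [Measure.quasiMeasurePreserving_fst.ae_eq_comp hff',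
      Measure.quasiMeasurePreserving_snd.ae_eq_comp hgg',
      (quasiMeasurePreserving_uncurry_shear hφ).ae_eq_comp hhh'] with z h₁ h₂ h₃
    simp only [comp_apply] at h₁ h₂ h₃
    rw [h₁, h₂]
    exact congrArg _ h₃
  have hform : ‖∫ z : (ℝ × ℝ) × (ℝ × ℝ), f' z.1 * g' z.2 * h' (shear φ z.1 z.2)‖ₑ ≤
      shearForm φ (‖f' ·‖ₑ) (‖g' ·‖ₑ) (‖h' ·‖ₑ) := by
    refine (enorm_integral_le_lintegral_enorm _).trans_eq ?_
    rw [Measure.volume_eq_prod, lintegral_prod (fun z : (ℝ × ℝ) × (ℝ × ℝ) =>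
      ‖f' z.1 * g' z.2 * h' (shear φ z.1 z.2)‖ₑ) (((hf'm.comp measurable_fst).mul
      (hg'm.comp measurable_snd)).mul (hh'm.comp (measurable_shear hφ))).enorm.aemeasurable]
    simp only [enorm_mul, shearForm]
  have hsupp : ∀ {u : ℝ × ℝ → 𝕜} {S : Set (ℝ × ℝ)}, support u ⊆ S → support (‖u ·‖ₑ) ⊆ S :=
    fun hu _ hp => hu (by simpa using hp)
  calc ‖∫ z : (ℝ × ℝ) × (ℝ × ℝ), f z.1 * g z.2 * h (shear φ z.1 z.2)‖ₑ ^ 2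
      ≤ shearForm φ (‖f' ·‖ₑ) (‖g' ·‖ₑ) (‖h' ·‖ₑ) ^ 2 := by rw [hcongr]; gcongr
    _ ≤ _ := sq_shearForm_le hφ hf'm.enorm hg'm.enorm hh'm.enorm hsymm hA₁ hB₁ hA₂ hB₂ hA₃ hB₃
          (hsupp hf's) (hsupp hg's) (hsupp hh's)
    _ = _ := by
        simp only [lintegral_enorm_sq_eq_eLpNorm_sq, eLpNorm_congr_ae hff', eLpNorm_congr_ae hgg',
          eLpNorm_congr_ae hhh']

theorem Jnt_eq_integral_shear (α : ℝ) (f g h : ℝ × ℝ → ℂ) :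
    Jnt α f g h = ∫ z : (ℝ × ℝ) × (ℝ × ℝ), f z.1 * g z.2 * h (shear (Omega α) z.1 z.2) :=
  rfl

theorem Omega_comm (α a b : ℝ) : Omega α a b = Omega α b a := by
  simp only [Omega, add_comm a b]; ring

theorem measurable_uncurry_Omega (α : ℝ) : Measurable (uncurry (Omega α)) := by
  unfold Omega omega uncurry; fun_prop

theorem measurableSet_Uset (k : ℤ) : MeasurableSet (Uset k) := by
  unfold Uset; split_ifs <;> exact measurable_abs measurableSet_Icc

theorem volume_Uset_ne_top (k : ℤ) : volume (Uset k) ≠ ∞ := by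
  unfold Uset
  split_ifs <;> exact ((measure_mono fun ν hν => abs_le.1 hν.2).trans_lt measure_Icc_lt_top).ne

theorem measurableSet_Jset (j : ℕ) : MeasurableSet (Jset j) := by
  cases j with
  | zero => exact measurableSet_Icc
  | succ j => exact measurable_abs measurableSet_Icc

theorem volume_Jset_le (j : ℕ) : volume (Jset j) ≤ ENNReal.ofReal (4 * 2 ^ j) := by
  cases j with
  | zero => simp only [Jset, Real.volume_Icc]; norm_num
  | succ j =>
    calc volume (Jset (j + 1)) ≤ volume (Icc (-(2 : ℝ) ^ (j + 2)) (2 ^ (j + 2))) :=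
          measure_mono fun ν hν => abs_le.1 hν.2
      _ = ENNReal.ofReal (4 * 2 ^ (j + 1)) := by rw [Real.volume_Icc]; ring_nf

theorem le_mul_rpow_half_of_sq_le {x L u : ℝ} {n : ℕ} (hx : 0 ≤ x) (hL : 0 ≤ L) (hu : 0 ≤ u)
    (h : x ^ 2 ≤ L ^ 2 * u * (4 * 2 ^ n)) : x ≤ 2 * u ^ (1 / 2 : ℝ) * 2 ^ ((n : ℝ) / 2) * L := by
  have hsq : (2 * u ^ (1 / 2 : ℝ) * 2 ^ ((n : ℝ) / 2) * L) ^ 2 = L ^ 2 * u * (4 * 2 ^ n) := by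
    rw [mul_pow, mul_pow, mul_pow, ← Real.rpow_natCast (u ^ _), ← Real.rpow_mul hu,
      ← Real.rpow_natCast ((2 : ℝ) ^ _), ← Real.rpow_mul zero_le_two]
    norm_num; ring
  exact (pow_le_pow_iff_left₀ hx (by positivity) two_ne_zero).1 (h.trans_eq hsq.symm)

theorem statement8_general (α : ℝ) :
    ∃ C : ℝ, 0 < C ∧
      ∀ (k₁ k₂ k₃ : ℤ) (j₁ j₂ j₃ : ℕ) (f₁ f₂ f₃ : ℝ × ℝ → ℂ),
        MemLp f₁ 2 volume → MemLp f₂ 2 volume → MemLp f₃ 2 volume →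
        Function.support f₁ ⊆ Uset k₁ ×ˢ Jset j₁ →
        Function.support f₂ ⊆ Uset k₂ ×ˢ Jset j₂ →
        Function.support f₃ ⊆ Uset k₃ ×ˢ Jset j₃ →
        ‖Jnt α f₁ f₂ f₃‖ ≤
          C * (min (min (volume (Uset k₁)).toReal (volume (Uset k₂)).toReal)
                (volume (Uset k₃)).toReal) ^ (1 / 2 : ℝ) *
            (2 : ℝ) ^ (((min (min j₁ j₂) j₃ : ℕ) : ℝ) / 2) *
            (L2N f₁ * L2N f₂ * L2N f₃) := by
  refine ⟨2, two_pos, fun k₁ k₂ k₃ j₁ j₂ j₃ f₁ f₂ f₃ hf₁ hf₂ hf₃ hs₁ hs₂ hs₃ => ?_⟩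
  rw [Jnt_eq_integral_shear]
  have hJ : min (min (volume (Jset j₁)) (volume (Jset j₂))) (volume (Jset j₃)) ≤
      ENNReal.ofReal (4 * 2 ^ min (min j₁ j₂) j₃) := by
    refine le_trans ?_ (volume_Jset_le _)
    rcases min_min_eq_or j₁ j₂ j₃ with h | h | h <;> rw [h] <;> simp
  have hU₁₂ : min (volume (Uset k₁)) (volume (Uset k₂)) ≠ ∞ :=
    ne_top_of_le_ne_top (volume_Uset_ne_top k₁) (min_le_left _ _)
  have hU : min (min (volume (Uset k₁)) (volume (Uset k₂))) (volume (Uset k₃)) ≠ ∞ :=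
    ne_top_of_le_ne_top (volume_Uset_ne_top k₃) (min_le_right _ _)
  have key := (enorm_integral_shear_sq_le (measurable_uncurry_Omega α) (Omega_comm α)
    hf₁.1 hf₂.1 hf₃.1 (measurableSet_Uset k₁) (measurableSet_Jset j₁) (measurableSet_Uset k₂)
    (measurableSet_Jset j₂) (measurableSet_Uset k₃) (measurableSet_Jset j₃) hs₁ hs₂ hs₃).trans
    (mul_le_mul_right (mul_le_mul_right hJ _) _)
  have hsq := ENNReal.toReal_mono (ENNReal.mul_ne_top
    (by simp [ENNReal.mul_eq_top, hf₁.eLpNorm_ne_top, hf₂.eLpNorm_ne_top, hf₃.eLpNorm_ne_top])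
    (ENNReal.mul_ne_top hU ENNReal.ofReal_ne_top)) key
  simp only [ENNReal.toReal_mul, ENNReal.toReal_pow, toReal_enorm,
    ENNReal.toReal_min hU₁₂ (volume_Uset_ne_top k₃),
    ENNReal.toReal_min (volume_Uset_ne_top k₁) (volume_Uset_ne_top k₂),
    ENNReal.toReal_ofReal (by positivity : (0 : ℝ) ≤ 4 * 2 ^ min (min j₁ j₂) j₃)] at hsq
  exact le_mul_rpow_half_of_sq_le (norm_nonneg _) (by unfold L2N; positivity) (by positivity)
    (hsq.trans_eq (by unfold L2N; ring))

/-- Trilinear estimate with the measure of the smallest frequency block. -/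
theorem statement8 (α : ℝ) (hα : α ∈ Set.Ioo (1 : ℝ) 2) :
    ∃ C : ℝ, 0 < C ∧
      ∀ (k₁ k₂ k₃ : ℤ) (j₁ j₂ j₃ : ℕ) (f₁ f₂ f₃ : ℝ × ℝ → ℂ),
        MemLp f₁ 2 volume → MemLp f₂ 2 volume → MemLp f₃ 2 volume →
        Function.support f₁ ⊆ Uset k₁ ×ˢ Jset j₁ →
        Function.support f₂ ⊆ Uset k₂ ×ˢ Jset j₂ →
        Function.support f₃ ⊆ Uset k₃ ×ˢ Jset j₃ →
        ‖Jnt α f₁ f₂ f₃‖ ≤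
          C * (min (min (volume (Uset k₁)).toReal (volume (Uset k₂)).toReal)
                (volume (Uset k₃)).toReal) ^ (1 / 2 : ℝ) *
            (2 : ℝ) ^ (((min (min j₁ j₂) j₃ : ℕ) : ℝ) / 2) *
            (L2N f₁ * L2N f₂ * L2N f₃) :=
  statement8_general α
end
end

section
/- Let α ∈ (1,2) and ω(ξ) = −ξ|ξ|^α. There exists a constant C such that the following holds: let U₁, U₂, U₃ ⊆ ℝ be measurable sets and d > 0 be such that (α+1) · ||ξ₁|^α − |ξ₂|^α| ≥ d whenever ξ₁ ∈ U₁, ξ₂ ∈ U₂ and ξ₁ + ξ₂ ∈ U₃. Then for every measurable function g : ℝ² → ℂ with ∫_{ℝ²} |g|² < ∞ and g(ξ,μ) = 0 whenever ξ ∉ U₃, one has ∫_{U₁×U₂} |g(ξ₁+ξ₂, ω(ξ₁)+ω(ξ₂))|² dξ₁ dξ₂ ≤ C d^{-1} ∫_{ℝ²} |g(ξ,μ)|² dξ dμ. -/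
/-!
Shearing `(ξ₁, ξ₂) ↦ (ξ₁ + ξ₂, ξ₂)` and Tonelli bound the left-hand side by
`∫ dξ ∫_{S_ξ} |g(ξ, φ_ξ(t))|² dt`, where `S_ξ = {t | ξ - t ∈ U₁, t ∈ U₂}` and
`φ_ξ(t) = ω(ξ - t) + ω(t)` (`omegaFiber`). Since `φ_ξ'(t) = (α + 1)(|ξ - t|^α - |t|^α)`, the
hypothesis says `|φ_ξ'| ≥ d` on `S_ξ` whenever `g(ξ, ·) ≠ 0`. For `ξ ≠ 0` the derivative vanishes
only at `t = ξ/2`, so by Darboux `φ_ξ` is strictly monotone on each side of `ξ/2`, and the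
one-dimensional change of variables `μ = φ_ξ(t)` on each side bounds the inner integral by
`d⁻¹ ∫ |g(ξ, μ)|² dμ`. This gives the estimate with `C = 2`.
-/

open MeasureTheory Set
open scoped ENNReal

noncomputable section

theorem Convex.injOn_of_hasDerivAt_ne_zero {s : Set ℝ} {f f' : ℝ → ℝ} (hs : Convex ℝ s)
    (hf : ∀ x ∈ s, HasDerivAt f (f' x) x) (hf' : ∀ x ∈ s, f' x ≠ 0) : InjOn f s := by
  have hcont : ContinuousOn f s := fun x hx => (hf x hx).continuousAt.continuousWithinAt
  have hf_int : ∀ x ∈ interior s, HasDerivWithinAt f (f' x) (interior s) x :=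
    fun x hx => (hf x (interior_subset hx)).hasDerivWithinAt
  rcases hasDerivWithinAt_forall_lt_or_forall_gt_of_forall_ne hs
    (fun x hx => (hf x hx).hasDerivWithinAt) hf' with hneg | hpos
  · exact (strictAntiOn_of_hasDerivWithinAt_neg hs hcont hf_int
      fun x hx => hneg x (interior_subset hx)).injOn
  · exact (strictMonoOn_of_hasDerivWithinAt_pos hs hcont hf_int
      fun x hx => hpos x (interior_subset hx)).injOn

theorem setLIntegral_comp_le_of_le_abs_deriv {s : Set ℝ} {f f' : ℝ → ℝ} {d : ℝ} (hd : 0 < d)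
    (hs : MeasurableSet s) (hf : ∀ x ∈ s, HasDerivWithinAt f (f' x) s x) (hinj : InjOn f s)
    (hf'd : ∀ x ∈ s, d ≤ |f' x|) (G : ℝ → ℝ≥0∞) :
    ∫⁻ x in s, G (f x) ≤ ENNReal.ofReal d⁻¹ * ∫⁻ y, G y := by
  have hpt : ∀ x ∈ s, G (f x) ≤ ENNReal.ofReal d⁻¹ * (ENNReal.ofReal |f' x| * G (f x)) := by
    intro x hx
    rw [← mul_assoc, ← ENNReal.ofReal_mul (by positivity)]
    refine le_mul_of_one_le_left zero_le ?_
    rw [ENNReal.one_le_ofReal, inv_mul_eq_div, one_le_div hd]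
    exact hf'd x hx
  calc ∫⁻ x in s, G (f x)
      ≤ ∫⁻ x in s, ENNReal.ofReal d⁻¹ * (ENNReal.ofReal |f' x| * G (f x)) :=
        setLIntegral_mono' hs hpt
    _ = ENNReal.ofReal d⁻¹ * ∫⁻ y in f '' s, G y := by
        rw [lintegral_const_mul' _ _ ENNReal.ofReal_ne_top,
          lintegral_image_eq_lintegral_abs_deriv_mul hs hf hinj]
    _ ≤ ENNReal.ofReal d⁻¹ * ∫⁻ y, G y := mul_le_mul_right (setLIntegral_le_lintegral _ _) _

theorem setLIntegral_prod_le_lintegral_setLIntegral_sub {G : Type*} [MeasurableSpace G]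
    [AddGroup G] [MeasurableAdd₂ G] [MeasurableNeg G] (μ ν : Measure G) [SFinite μ] [SFinite ν]
    [μ.IsAddRightInvariant] {s t : Set G} (hs : MeasurableSet s) (ht : MeasurableSet t)
    (K : G × G → ℝ≥0∞) :
    ∫⁻ z in s ×ˢ t, K z ∂μ.prod ν ≤ ∫⁻ x, ∫⁻ y in (x - ·) ⁻¹' s ∩ t, K (x - y, y) ∂ν ∂μ := by
  let shear : G × G ≃ᵐ G × G :=
    { toFun := fun z => (z.1 - z.2, z.2)
      invFun := fun z => (z.1 + z.2, z.2)
      left_inv := fun z => by simp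
      right_inv := fun z => by simp
      measurable_toFun := (measurable_fst.sub measurable_snd).prodMk measurable_snd
      measurable_invFun := (measurable_fst.add measurable_snd).prodMk measurable_snd }
  rw [← lintegral_indicator (hs.prod ht),
    ← (measurePreserving_sub_prod μ ν).lintegral_comp_emb shear.measurableEmbedding]
  refine (lintegral_prod_le _).trans (lintegral_mono fun x => ?_)
  rw [← lintegral_indicator (((measurable_const_sub x) hs).inter ht)]
  exact le_rfl

theorem hasDerivAt_omega {α : ℝ} (hα : 1 < α) (x : ℝ) :
    HasDerivAt (omega α) (-(α + 1) * |x| ^ α) x := by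
  have h := (hasDerivAt_neg x).mul (hasDerivAt_abs_rpow x hα)
  refine h.congr_deriv ?_
  have hsq : x * |x| ^ (α - 2) * x = |x| ^ α := by
    rw [mul_right_comm, ← sq, ← sq_abs, ← Real.rpow_two, ← Real.rpow_add' (abs_nonneg x)]
    · ring_nf
    · linarith
  linear_combination (-α) * hsq

def omegaFiber (α ξ t : ℝ) : ℝ := omega α (ξ - t) + omega α t

theorem hasDerivAt_omegaFiber {α : ℝ} (hα : 1 < α) (ξ t : ℝ) :
    HasDerivAt (omegaFiber α ξ) ((α + 1) * (|ξ - t| ^ α - |t| ^ α)) t := by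
  have h := ((hasDerivAt_omega hα (ξ - t)).comp t ((hasDerivAt_id t).const_sub ξ)).add
    (hasDerivAt_omega hα t)
  exact h.congr_deriv (by ring)

theorem abs_sub_ne_abs_of_ne_half {ξ t : ℝ} (hξ : ξ ≠ 0) (ht : t ≠ ξ / 2) : |ξ - t| ≠ |t| := by
  intro h
  have : ξ * (ξ - 2 * t) = 0 := by
    have h2 := congrArg (· ^ 2) h
    simp only [sq_abs] at h2
    linear_combination h2
  rcases mul_eq_zero.1 this with h0 | h0
  · exact hξ h0
  · exact ht (by linarith)

theorem injOn_omegaFiber {α : ℝ} (hα : 1 < α) {ξ : ℝ} (hξ : ξ ≠ 0) {s : Set ℝ}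
    (hs : Convex ℝ s) (hξs : ξ / 2 ∉ s) : InjOn (omegaFiber α ξ) s := by
  refine hs.injOn_of_hasDerivAt_ne_zero (fun t _ => hasDerivAt_omegaFiber hα ξ t) fun t ht => ?_
  have hne : |ξ - t| ^ α ≠ |t| ^ α := by
    rw [Ne, Real.rpow_left_inj (abs_nonneg _) (abs_nonneg _) (by positivity)]
    exact abs_sub_ne_abs_of_ne_half hξ fun h => hξs (h ▸ ht)
  exact mul_ne_zero (by positivity) (sub_ne_zero.2 hne)

theorem setLIntegral_comp_omegaFiber_le {α : ℝ} (hα : 1 < α) {d : ℝ} (hd : 0 < d) (ξ : ℝ)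
    {S : Set ℝ} (hS : MeasurableSet S)
    (hsep : ∀ t ∈ S, d ≤ (α + 1) * |(|ξ - t| ^ α) - (|t| ^ α)|) (G : ℝ → ℝ≥0∞) :
    ∫⁻ t in S, G (omegaFiber α ξ t) ≤ ENNReal.ofReal (2 / d) * ∫⁻ μ, G μ := by
  rcases S.eq_empty_or_nonempty with rfl | ⟨t₀, ht₀⟩
  · simp
  have hξ : ξ ≠ 0 := by
    rintro rfl
    have := hsep t₀ ht₀
    simp only [zero_sub, abs_neg, sub_self, abs_zero, mul_zero] at this
    linarith
  have hhalf : ξ / 2 ∉ S := fun h => by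
    have := hsep _ h
    rw [sub_half, sub_self, abs_zero, mul_zero] at this
    linarith
  have hpiece : ∀ I : Set ℝ, Convex ℝ I → MeasurableSet I → ξ / 2 ∉ I →
      ∫⁻ t in S ∩ I, G (omegaFiber α ξ t) ≤ ENNReal.ofReal d⁻¹ * ∫⁻ μ, G μ :=
    fun I hI hIm hξI => setLIntegral_comp_le_of_le_abs_deriv hd (hS.inter hIm)
      (fun t _ => (hasDerivAt_omegaFiber hα ξ t).hasDerivWithinAt)
      ((injOn_omegaFiber hα hξ hI hξI).mono inter_subset_right)
      (fun t ht => by rw [abs_mul, abs_of_pos (by linarith)]; exact hsep t ht.1) G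
  have hsplit : S ⊆ S ∩ Iio (ξ / 2) ∪ S ∩ Ioi (ξ / 2) := fun t ht =>
    (Ne.lt_or_gt fun h : t = ξ / 2 => hhalf (h ▸ ht)).imp (⟨ht, ·⟩) (⟨ht, ·⟩)
  calc ∫⁻ t in S, G (omegaFiber α ξ t)
      ≤ ∫⁻ t in S ∩ Iio (ξ / 2) ∪ S ∩ Ioi (ξ / 2), G (omegaFiber α ξ t) :=
        lintegral_mono_set hsplit
    _ ≤ (ENNReal.ofReal d⁻¹ * ∫⁻ μ, G μ) + ENNReal.ofReal d⁻¹ * ∫⁻ μ, G μ :=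
        (lintegral_union_le _ _ _).trans <| add_le_add
          (hpiece _ (convex_Iio _) measurableSet_Iio (lt_irrefl (ξ / 2)))
          (hpiece _ (convex_Ioi _) measurableSet_Ioi (lt_irrefl (ξ / 2)))
    _ = ENNReal.ofReal (2 / d) * ∫⁻ μ, G μ := by
        rw [← add_mul, ← ENNReal.ofReal_add (by positivity) (by positivity)]
        congr 2
        ring

/-- Change-of-variables `L²` estimate on the curve `(ξ₁+ξ₂, ω(ξ₁)+ω(ξ₂))` under a
transversality (group velocity separation) assumption. -/
theorem statement14 (α : ℝ) (hα : α ∈ Set.Ioo (1 : ℝ) 2) :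
    ∃ C : ℝ, 0 < C ∧
      ∀ (U₁ U₂ U₃ : Set ℝ), MeasurableSet U₁ → MeasurableSet U₂ → MeasurableSet U₃ →
      ∀ d : ℝ, 0 < d →
      (∀ ξ₁ ∈ U₁, ∀ ξ₂ ∈ U₂, ξ₁ + ξ₂ ∈ U₃ →
        d ≤ (α + 1) * |(|ξ₁| ^ α) - (|ξ₂| ^ α)|) →
      ∀ g : ℝ × ℝ → ℂ, Measurable g →
        (∫⁻ q : ℝ × ℝ, (‖g q‖₊ : ℝ≥0∞) ^ 2) < ⊤ →
        (∀ ξ μ : ℝ, ξ ∉ U₃ → g (ξ, μ) = 0) →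
        (∫⁻ p in U₁ ×ˢ U₂,
            (‖g (p.1 + p.2, omega α p.1 + omega α p.2)‖₊ : ℝ≥0∞) ^ 2) ≤
          ENNReal.ofReal (C / d) * ∫⁻ q : ℝ × ℝ, (‖g q‖₊ : ℝ≥0∞) ^ 2 := by
  refine ⟨2, two_pos, fun U₁ U₂ U₃ hU₁ hU₂ _ d hd hsep g hg _ hsupp => ?_⟩
  set F : ℝ × ℝ → ℝ≥0∞ := fun q => (‖g q‖₊ : ℝ≥0∞) ^ 2
  have hfiber : ∀ ξ, ∫⁻ t in (ξ - ·) ⁻¹' U₁ ∩ U₂, F (ξ, omegaFiber α ξ t) ≤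
      ENNReal.ofReal (2 / d) * ∫⁻ μ, F (ξ, μ) := by
    intro ξ
    by_cases hξ : ξ ∈ U₃
    · exact setLIntegral_comp_omegaFiber_le hα.1 hd ξ (((measurable_const_sub ξ) hU₁).inter hU₂)
        (fun t ht => hsep _ ht.1 _ ht.2 (by rwa [sub_add_cancel])) _
    · simp [F, hsupp ξ _ hξ]
  rw [Measure.volume_eq_prod]
  calc ∫⁻ p in U₁ ×ˢ U₂, F (p.1 + p.2, omega α p.1 + omega α p.2) ∂volume.prod volume
      ≤ ∫⁻ ξ, ∫⁻ t in (ξ - ·) ⁻¹' U₁ ∩ U₂, F (ξ, omegaFiber α ξ t) :=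
        (setLIntegral_prod_le_lintegral_setLIntegral_sub _ _ hU₁ hU₂ _).trans_eq <| by
          simp only [sub_add_cancel, omegaFiber]
    _ ≤ ∫⁻ ξ, ENNReal.ofReal (2 / d) * ∫⁻ μ, F (ξ, μ) := lintegral_mono hfiber
    _ = ENNReal.ofReal (2 / d) * ∫⁻ q, F q ∂volume.prod volume := by
        rw [lintegral_const_mul' _ _ ENNReal.ofReal_ne_top,
          lintegral_prod _ (by fun_prop : Measurable F).aemeasurable]
end
end
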